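/- Let M1 = DLS(ρ1; D1, D2) be a DLS matrix of order n over F_{2^r}, and suppose ρ2 ∈ S_n is conjugate to ρ1 (i.e., ρ2 = σ·ρ1·σ^{-1} for some σ ∈ S_n). Then there exist a nonsingular diagonal matrix D1' and a diagonal matrix D2' over F_{2^r} such that, with P the permutation matrix of σ, P·M1·P^{-1} = DLS(ρ2; D1', D2'); consequently, for every positive integer k, M1 is k-NMDS if and only if M2 = DLS(ρ2; D1', D2') is k-NMDS. -/

import Mathlib

set_option linter.unusedSectionVars false

open Matrix

/-- The Hamming weight of a vector: the number of nonzero coordinates. -/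
def wt {F : Type*} [Zero F] [DecidableEq F] {n : ℕ} (x : Fin n → F) : ℕ :=
  (Finset.univ.filter fun i => x i ≠ 0).card

/-- The differential branch number of a square matrix `M`:
the minimum of `wt x + wt (M x)` over all nonzero vectors `x`. -/
noncomputable def branchD {F : Type*} [Field F] [DecidableEq F] {n : ℕ}
    (M : Matrix (Fin n) (Fin n) F) : ℕ :=
  sInf {k | ∃ x : Fin n → F, x ≠ 0 ∧ k = wt x + wt (M.mulVec x)}

/-- The linear branch number of a square matrix `M`:
the minimum of `wt x + wt (Mᵀ x)` over all nonzero vectors `x`. -/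
noncomputable def branchL {F : Type*} [Field F] [DecidableEq F] {n : ℕ}
    (M : Matrix (Fin n) (Fin n) F) : ℕ :=
  sInf {k | ∃ x : Fin n → F, x ≠ 0 ∧ k = wt x + wt (Mᵀ.mulVec x)}

/-- A square matrix of order `n` is near-MDS (NMDS) if both its differential
and linear branch numbers equal `n`. -/
def IsNMDS {F : Type*} [Field F] [DecidableEq F] {n : ℕ}
    (M : Matrix (Fin n) (Fin n) F) : Prop :=
  branchD M = n ∧ branchL M = n
/-- The permutation matrix associated to a permutation `σ`
(a 0-1 matrix obtained by permuting the rows of the identity matrix). -/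
def permMatrix (F : Type*) [Zero F] [One F] {n : ℕ} (σ : Equiv.Perm (Fin n)) :
    Matrix (Fin n) (Fin n) F :=
  Matrix.of fun i j => if i = σ j then 1 else 0
/-- The diagonal-like sparse (DLS) matrix `DLS(σ; D1, D2) = P·D1 + D2`, where `P` is
the permutation matrix of `σ`. -/
def DLS {F : Type*} [Field F] {n : ℕ} (σ : Equiv.Perm (Fin n)) (D1 D2 : Fin n → F) :
    Matrix (Fin n) (Fin n) F :=
  permMatrix F σ * Matrix.diagonal D1 + Matrix.diagonal D2

section Aux
variable {F : Type*} [Field F] [DecidableEq F] {n : ℕ}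

lemma permMatrix_mulVec (σ : Equiv.Perm (Fin n)) (x : Fin n → F) :
    (permMatrix F σ).mulVec x = fun i => x (σ⁻¹ i) := by
  funext i
  simp only [permMatrix, mulVec, dotProduct, of_apply, ite_mul, one_mul, zero_mul]
  have : ∀ j, (i = σ j) = (j = σ⁻¹ i) := by
    intro j
    rw [eq_iff_iff, eq_comm (a := j)]
    constructor <;> (rintro rfl; simp)
  simp only [this]
  rw [Finset.sum_ite_eq' Finset.univ (σ⁻¹ i)]
  simp

lemma permMatrix_mul_permMatrix (σ τ : Equiv.Perm (Fin n)) :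
    (permMatrix F σ) * (permMatrix F τ) = permMatrix F (σ * τ) := by
  ext i j
  simp only [permMatrix, mul_apply, of_apply, Equiv.Perm.mul_apply, ite_mul,
    one_mul, zero_mul]
  have h : ∀ x, (if i = σ x then if x = τ j then (1:F) else 0 else 0)
      = if x = τ j then (if i = σ x then 1 else 0) else 0 := by
    intro x; split_ifs <;> rfl
  simp only [h]
  rw [Finset.sum_ite_eq' Finset.univ (τ j)]
  simp
  congr

lemma permMatrix_one : permMatrix F (1 : Equiv.Perm (Fin n)) = 1 := by
  ext i j
  simp [permMatrix, Matrix.one_apply]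
  congr

lemma permMatrix_transpose (σ : Equiv.Perm (Fin n)) :
    (permMatrix F σ)ᵀ = permMatrix F σ⁻¹ := by
  ext i j
  simp only [transpose_apply, permMatrix, of_apply]
  have : (j = σ i) = (i = σ⁻¹ j) := by
    rw [eq_iff_iff]
    constructor <;> (rintro rfl; simp)
  simp only [this]

lemma diagonal_mul_permMatrix (σ : Equiv.Perm (Fin n)) (D : Fin n → F) :
    Matrix.diagonal D * permMatrix F σ = permMatrix F σ * Matrix.diagonal (fun i => D (σ i)) := by
  ext i j
  simp only [mul_apply, permMatrix, of_apply, diagonal_apply, ite_mul, mul_ite,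
    mul_one, mul_zero, zero_mul, one_mul]
  rw [Finset.sum_ite_eq' Finset.univ (σ j) fun x => if i = x then D i else 0,
    Finset.sum_ite_eq' Finset.univ j fun x => if i = σ x then D (σ x) else 0]
  simp only [Finset.mem_univ, if_true]
  split_ifs with hc
  · subst hc; simp
  · rfl

lemma wt_comp (σ : Equiv.Perm (Fin n)) (x : Fin n → F) :
    wt (fun i => x (σ i)) = wt x := by
  unfold wt
  have h : (Finset.univ.filter fun i => x (σ i) ≠ 0)
      = (Finset.univ.filter fun i => x i ≠ 0).map σ.symm.toEmbedding := by
    ext j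
    simp [Finset.mem_map_equiv]
  rw [h, Finset.card_map]

lemma branchD_conj (σ : Equiv.Perm (Fin n)) (M : Matrix (Fin n) (Fin n) F) :
    branchD (permMatrix F σ * M * permMatrix F σ⁻¹) = branchD M := by
  unfold branchD
  congr 1
  ext k
  constructor
  · rintro ⟨x, hx, rfl⟩
    refine ⟨fun i => x (σ i), ?_, ?_⟩
    · intro h
      apply hx
      funext i
      have := congrFun h (σ⁻¹ i)
      simpa using this
    · rw [wt_comp]
      congr 1
      rw [Matrix.mul_assoc, ← Matrix.mulVec_mulVec, ← Matrix.mulVec_mulVec,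
        _root_.permMatrix_mulVec, _root_.permMatrix_mulVec]
      rw [wt_comp σ⁻¹ (M.mulVec fun i => x (σ⁻¹⁻¹ i))]
      simp
  · rintro ⟨x, hx, rfl⟩
    refine ⟨fun i => x (σ⁻¹ i), ?_, ?_⟩
    · intro h
      apply hx
      funext i
      have := congrFun h (σ i)
      simpa using this
    · have h1 : wt (fun i => x (σ⁻¹ i)) = wt x := wt_comp σ⁻¹ x
      rw [h1]
      congr 1
      rw [Matrix.mul_assoc, ← Matrix.mulVec_mulVec, ← Matrix.mulVec_mulVec,
        _root_.permMatrix_mulVec, _root_.permMatrix_mulVec]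
      have h2 : (fun i => (fun j => x (σ⁻¹ j)) (σ⁻¹⁻¹ i)) = x := by
        funext i; simp
      rw [h2, wt_comp σ⁻¹ (M.mulVec x)]

lemma conj_pow' (σ : Equiv.Perm (Fin n)) (M : Matrix (Fin n) (Fin n) F) (k : ℕ) :
    (permMatrix F σ * M * permMatrix F σ⁻¹) ^ k
      = permMatrix F σ * M ^ k * permMatrix F σ⁻¹ := by
  induction k with
  | zero =>
    simp [permMatrix_mul_permMatrix, _root_.permMatrix_one]
  | succ k ih =>
    rw [pow_succ, pow_succ, ih]
    have : permMatrix F σ⁻¹ * (permMatrix F σ * M * permMatrix F σ⁻¹)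
        = M * permMatrix F σ⁻¹ := by
      rw [← Matrix.mul_assoc, ← Matrix.mul_assoc, permMatrix_mul_permMatrix]
      simp [_root_.permMatrix_one]
    rw [Matrix.mul_assoc (permMatrix F σ * M ^ k), this,
      ← Matrix.mul_assoc, ← Matrix.mul_assoc]

lemma isNMDS_conj (σ : Equiv.Perm (Fin n)) (M : Matrix (Fin n) (Fin n) F) :
    IsNMDS (permMatrix F σ * M * permMatrix F σ⁻¹) ↔ IsNMDS M := by
  have hT : (permMatrix F σ * M * permMatrix F σ⁻¹)ᵀ
      = permMatrix F σ * Mᵀ * permMatrix F σ⁻¹ := by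
    rw [Matrix.transpose_mul, Matrix.transpose_mul, permMatrix_transpose,
      permMatrix_transpose]
    simp [Matrix.mul_assoc]
  have hL : branchL (permMatrix F σ * M * permMatrix F σ⁻¹) = branchL M := by
    unfold branchL
    have := branchD_conj σ Mᵀ
    unfold branchD at this
    rw [hT]
    exact this
  unfold IsNMDS
  rw [branchD_conj, hL]

end Aux

/-- If ρ₂ = σ·ρ₁·σ⁻¹ is conjugate to ρ₁, then with P the permutation matrix of σ
there are diagonal matrices D1' (nonsingular) and D2' with
P·DLS(ρ₁;D1,D2)·P⁻¹ = DLS(ρ₂;D1',D2'); hence for every k > 0, DLS(ρ₁;D1,D2) is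
k-NMDS iff DLS(ρ₂;D1',D2') is k-NMDS. -/
theorem stmt_14 {F : Type*} [Field F] [Fintype F] [DecidableEq F] [CharP F 2]
    {n : ℕ} (ρ1 ρ2 σ : Equiv.Perm (Fin n)) (hρ1 : ∀ i, ρ1 i ≠ i)
    (hconj : ρ2 = σ * ρ1 * σ⁻¹)
    (D1 D2 : Fin n → F) (hD1 : ∀ i, D1 i ≠ 0) :
    ∃ D1' D2' : Fin n → F, (∀ i, D1' i ≠ 0) ∧
      permMatrix F σ * DLS ρ1 D1 D2 * (permMatrix F σ)⁻¹ = DLS ρ2 D1' D2' ∧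
      ∀ k : ℕ, 0 < k →
        (IsNMDS (DLS ρ1 D1 D2 ^ k) ↔ IsNMDS (DLS ρ2 D1' D2' ^ k)) := by
  have hinv : (permMatrix F σ)⁻¹ = permMatrix F σ⁻¹ := by
    apply Matrix.inv_eq_right_inv
    rw [permMatrix_mul_permMatrix]
    simp [_root_.permMatrix_one]
  have heq : permMatrix F σ * DLS ρ1 D1 D2 * permMatrix F σ⁻¹
      = DLS ρ2 (fun i => D1 (σ⁻¹ i)) (fun i => D2 (σ⁻¹ i)) := by
    unfold DLS
    rw [Matrix.mul_add, Matrix.add_mul]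
    congr 1
    · rw [← Matrix.mul_assoc, permMatrix_mul_permMatrix, Matrix.mul_assoc,
        diagonal_mul_permMatrix, ← Matrix.mul_assoc, permMatrix_mul_permMatrix, hconj]
    · rw [Matrix.mul_assoc, diagonal_mul_permMatrix, ← Matrix.mul_assoc,
        permMatrix_mul_permMatrix]
      simp only [mul_inv_cancel, _root_.permMatrix_one, Matrix.one_mul]
  refine ⟨fun i => D1 (σ⁻¹ i), fun i => D2 (σ⁻¹ i), fun i => hD1 _, ?_, fun k hk => ?_⟩
  · rw [hinv]; exact heq
  · rw [← heq, conj_pow']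
    exact (isNMDS_conj σ _).symm
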